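/- In the setup (G centerless, f, h : G → Aut(G) with h(σ) = conj(g(σ))∘f(σ), g a bijection satisfying g(στ) = g(σ)·f(σ)(g(τ)), and N = {ρ(g(σ))∘f(σ) : σ ∈ G} a normal subgroup of Hol(G)), the map σ ↦ g(σ)·g(ker(h)) is a surjective group homomorphism from G to G/g(ker(h)), and the map σ ↦ g(σ)⁻¹·g(ker(f)) is a surjective group homomorphism from G to G/g(ker(f)) (i.e., g induces a surjective anti-homomorphism from G to G/g(ker(f))). Here g(ker(f)) and g(ker(h)) are normal (indeed characteristic) subgroups of G. -/

import Mathlib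

/-- The left regular representation `λ : G →* Perm G`, `λ(σ)(x) = σ·x`. -/
def lambda (G : Type*) [Group G] : G →* Equiv.Perm G where
  toFun σ := Equiv.mulLeft σ
  map_one' := by ext x; simp
  map_mul' σ τ := by ext x; simp [mul_assoc]

/-- The right regular representation `ρ : G →* Perm G`, `ρ(σ)(x) = x·σ⁻¹`. -/
def rho (G : Type*) [Group G] : G →* Equiv.Perm G where
  toFun σ := Equiv.mulRight σ⁻¹
  map_one' := by ext x; simp
  map_mul' σ τ := by ext x; simp [mul_assoc]

/-- The holomorph `Hol(G)`: the normalizer of `λ(G)` in `Perm G`. -/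
def Hol (G : Type*) [Group G] : Subgroup (Equiv.Perm G) :=
  Subgroup.normalizer (((lambda G).range : Subgroup (Equiv.Perm G)) : Set (Equiv.Perm G))

section Aux
variable {G : Type*} [Group G]

lemma toPerm_apply' (F : MulAut G) (x : G) : MulAut.toPerm G F x = F x := rfl

lemma toPerm_symm_apply' (F : MulAut G) (x : G) : (MulAut.toPerm G F).symm x = F.symm x := rfl

lemma lambda_apply (a x : G) : lambda G a x = a * x := rfl
lemma rho_apply (a x : G) : rho G a x = x * a⁻¹ := rfl

lemma lambda_mem_Hol (a : G) : lambda G a ∈ Hol G :=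
  Subgroup.le_normalizer (H := (lambda G).range) ⟨a, rfl⟩

lemma rho_lambda_comm (a b : G) :
    rho G a * lambda G b = lambda G b * rho G a := by
  ext x
  simp [rho, lambda, mul_assoc]

lemma rho_mem_Hol (a : G) : rho G a ∈ Hol G := by
  rw [Hol, Subgroup.mem_normalizer_iff]
  intro n
  constructor
  · rintro ⟨b, rfl⟩
    refine ⟨b, ?_⟩
    rw [rho_lambda_comm, mul_inv_cancel_right]
  · rintro ⟨b, hb⟩
    refine ⟨b, ?_⟩
    have hn : n = (rho G a)⁻¹ * lambda G b * rho G a := by rw [hb]; group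
    rw [hn, ← map_inv, rho_lambda_comm, mul_assoc, ← map_mul]
    simp

lemma extract (b gτ : G) (F fτ : MulAut G)
    (hEq : rho G b * MulAut.toPerm G F = rho G gτ * MulAut.toPerm G fτ) :
    gτ = b ∧ fτ = F := by
  have h1 : ∀ x, F x * b⁻¹ = fτ x * gτ⁻¹ := by
    intro x
    have := congrArg (fun p : Equiv.Perm G => p x) hEq
    simpa [rho, toPerm_apply'] using this
  have hb : gτ = b := by
    have := h1 1
    simp at this
    exact this.symm
  subst hb
  refine ⟨rfl, ?_⟩
  ext x
  have := (h1 x).symm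
  exact mul_right_cancel this

lemma conj_rho (a σgσ : G) (F : MulAut G) :
    rho G a * (rho G σgσ * MulAut.toPerm G F) * (rho G a)⁻¹
      = rho G (a * σgσ * (F a)⁻¹) * MulAut.toPerm G F := by
  ext x
  simp [rho, toPerm_apply', mul_assoc]

lemma conj_lambda (a σgσ : G) (F : MulAut G) :
    lambda G a * (rho G σgσ * MulAut.toPerm G F) * (lambda G a)⁻¹
      = rho G (σgσ * F a * a⁻¹) * MulAut.toPerm G (MulAut.conj (a * (F a)⁻¹) * F) := by
  ext x
  simp [rho, lambda, toPerm_apply', toPerm_symm_apply', MulAut.conj_apply, mul_assoc]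

end Aux

/-- In the setup, with `Kf = g(ker f)` and `Kh = g(ker h)` (which are
normal, indeed characteristic, subgroups of `G`), the map `σ ↦ g(σ)·Kh` is a
surjective group homomorphism `G → G/Kh`, and the map `σ ↦ g(σ)⁻¹·Kf` is a
surjective group homomorphism `G → G/Kf` (i.e. `g` induces a surjective
anti-homomorphism `G → G/Kf`). -/
theorem g_induces_hom_and_antihom
    (G : Type*) [Group G] (hZ : Subgroup.center G = ⊥)
    (f h : G →* MulAut G) (g : Equiv.Perm G) (hg1 : g 1 = 1)
    (hrel : ∀ σ τ : G, g (σ * τ) = g σ * (f σ) (g τ))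
    (hh : ∀ σ : G, h σ = MulAut.conj (g σ) * f σ)
    (N : Subgroup (Equiv.Perm G))
    (hN : (N : Set (Equiv.Perm G))
      = {q | ∃ σ : G, q = rho G (g σ) * MulAut.toPerm G (f σ)})
    (hNle : N ≤ Hol G)
    (hNnorm : ∀ x ∈ Hol G, ∀ n ∈ N, x * n * x⁻¹ ∈ N)
    (Kf Kh : Subgroup G) [Kf.Normal] [Kh.Normal]
    (hKf : (Kf : Set G) = ⇑g '' (f.ker : Set G))
    (hKh : (Kh : Set G) = ⇑g '' (h.ker : Set G))
    :
    (∃ φ : G →* G ⧸ Kh, Function.Surjective φ ∧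
        ∀ σ : G, φ σ = QuotientGroup.mk (g σ)) ∧
      (∃ ψ : G →* G ⧸ Kf, Function.Surjective ψ ∧
        ∀ σ : G, ψ σ = QuotientGroup.mk ((g σ)⁻¹ : G)) := by
  have memN : ∀ σ : G, rho G (g σ) * MulAut.toPerm G (f σ) ∈ N := by
    intro σ
    rw [← SetLike.mem_coe, hN]
    exact ⟨σ, rfl⟩
  have memN' : ∀ q ∈ N, ∃ σ : G, q = rho G (g σ) * MulAut.toPerm G (f σ) := by
    intro q hq
    rw [← SetLike.mem_coe, hN] at hq
    exact hq
  have ginv : ∀ σ : G, f σ (g σ⁻¹) = (g σ)⁻¹ := by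
    intro σ
    have h0 := hrel σ σ⁻¹
    rw [mul_inv_cancel, hg1] at h0
    exact (eq_inv_of_mul_eq_one_right h0.symm)
  have factA : ∀ σ a : G, ∃ τ : G,
      g τ = g σ * f σ a * a⁻¹ ∧ f τ = MulAut.conj (a * (f σ a)⁻¹) * f σ := by
    intro σ a
    have hm := hNnorm (lambda G a) (lambda_mem_Hol a) _ (memN σ)
    rw [conj_lambda] at hm
    obtain ⟨τ, hτ⟩ := memN' _ hm
    obtain ⟨h1, h2⟩ := extract _ _ _ _ hτ
    exact ⟨τ, h1, h2⟩
  have factB : ∀ σ a : G, ∃ τ : G,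
      g τ = a * g σ * (f σ a)⁻¹ ∧ f τ = f σ := by
    intro σ a
    have hm := hNnorm (rho G a) (rho_mem_Hol a) _ (memN σ)
    rw [conj_rho] at hm
    obtain ⟨τ, hτ⟩ := memN' _ hm
    obtain ⟨h1, h2⟩ := extract _ _ _ _ hτ
    exact ⟨τ, h1, h2⟩
  -- Key fact for Kh
  have keyKh : ∀ σ x : G, f σ x * x⁻¹ ∈ Kh := by
    intro σ x
    obtain ⟨τ, h1, h2⟩ := factA σ x
    have hτσ : h τ = h σ := by
      rw [hh, hh, h1, h2, ← mul_assoc, ← map_mul]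
      have harg : g σ * f σ x * x⁻¹ * (x * (f σ x)⁻¹) = g σ := by group
      rw [harg]
    have hker : τ * σ⁻¹ ∈ h.ker := by
      rw [MonoidHom.mem_ker, map_mul, map_inv, hτσ, mul_inv_cancel]
    have hgv : g (τ * σ⁻¹) = f σ x * x⁻¹ := by
      rw [hrel τ σ⁻¹, h1, h2, MulAut.mul_apply, ginv, MulAut.conj_apply]
      group
    rw [← SetLike.mem_coe, hKh]
    exact ⟨τ * σ⁻¹, hker, hgv⟩
  -- Key fact for Kf
  have keyKf : ∀ σ x : G, h σ x * x⁻¹ ∈ Kf := by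
    intro σ x
    have hx : h σ x = g σ * f σ x * (g σ)⁻¹ := by
      rw [hh, MulAut.mul_apply, MulAut.conj_apply]
    obtain ⟨τ, h1, h2⟩ := factB σ (g σ * f σ x * (g σ)⁻¹)
    have hker : σ⁻¹ * τ ∈ f.ker := by
      rw [MonoidHom.mem_ker, map_mul, map_inv, h2, inv_mul_cancel]
    have hgs : g σ⁻¹ = (f σ)⁻¹ ((g σ)⁻¹) := by
      have h3 : (f σ)⁻¹ (f σ (g σ⁻¹)) = g σ⁻¹ := by simp
      rw [ginv] at h3
      exact h3.symm
    have hgv : g (σ⁻¹ * τ) = x * (g σ * f σ x * (g σ)⁻¹)⁻¹ := by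
      rw [hrel, map_inv f, h1, hgs, ← map_mul]
      have harg : (g σ)⁻¹ * (g σ * f σ x * (g σ)⁻¹ * g σ * (f σ (g σ * f σ x * (g σ)⁻¹))⁻¹)
          = f σ (x * (g σ * f σ x * (g σ)⁻¹)⁻¹) := by
        simp only [map_mul, map_inv]
        group
      rw [harg, MulAut.inv_apply_self]
    have hmem : x * (g σ * f σ x * (g σ)⁻¹)⁻¹ ∈ Kf := by
      rw [← SetLike.mem_coe, hKf]
      exact ⟨σ⁻¹ * τ, hker, hgv⟩
    have := Kf.inv_mem hmem
    rw [hx]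
    have heq : (x * (g σ * f σ x * (g σ)⁻¹)⁻¹)⁻¹ = g σ * f σ x * (g σ)⁻¹ * x⁻¹ := by group
    rwa [heq] at this
  constructor
  · refine ⟨{ toFun := fun σ => ((g σ : G) : G ⧸ Kh),
              map_one' := by show ((g (1:G) : G) : G ⧸ Kh) = 1; rw [hg1]; rfl,
              map_mul' := fun σ τ => ?_ }, ?_, fun σ => rfl⟩
    · show ((g (σ * τ) : G) : G ⧸ Kh) = ↑(g σ) * ↑(g τ)
      rw [hrel, ← QuotientGroup.mk_mul, QuotientGroup.eq]
      have := Subgroup.Normal.conj_mem ‹Kh.Normal› _ (Kh.inv_mem (keyKh σ (g τ))) (f σ (g τ))⁻¹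
      have heq : (f σ (g τ))⁻¹ * (f σ (g τ) * (g τ)⁻¹)⁻¹ * (f σ (g τ))⁻¹⁻¹
          = (g σ * f σ (g τ))⁻¹ * (g σ * g τ) := by group
      rwa [heq] at this
    · intro q
      obtain ⟨x, rfl⟩ := QuotientGroup.mk_surjective q
      exact ⟨g.symm x, by simp⟩
  · refine ⟨{ toFun := fun σ => (((g σ)⁻¹ : G) : G ⧸ Kf),
              map_one' := by show (((g (1:G))⁻¹ : G) : G ⧸ Kf) = 1; rw [hg1]; simp,
              map_mul' := fun σ τ => ?_ }, ?_, fun σ => rfl⟩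
    · show (((g (σ * τ))⁻¹ : G) : G ⧸ Kf) = ↑(g σ)⁻¹ * ↑(g τ)⁻¹
      rw [hrel, ← QuotientGroup.mk_mul, QuotientGroup.eq]
      have := keyKf σ (g τ)
      have hx : h σ (g τ) = g σ * f σ (g τ) * (g σ)⁻¹ := by
        rw [hh, MulAut.mul_apply, MulAut.conj_apply]
      rw [hx] at this
      have heq : g σ * f σ (g τ) * (g σ)⁻¹ * (g τ)⁻¹
          = (g σ * f σ (g τ))⁻¹⁻¹ * ((g σ)⁻¹ * (g τ)⁻¹) := by group
      rwa [heq] at this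
    · intro q
      obtain ⟨x, rfl⟩ := QuotientGroup.mk_surjective q
      exact ⟨g.symm x⁻¹, by simp⟩
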